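/- Let X be an integral scheme, E a locally free sheaf of rank n on X, and φ : E → E an O_X-linear endomorphism such that for every closed point y of X the induced endomorphism φ(y) of the fiber E ⊗ κ(y) is nilpotent (equivalently, φ(y)^n = 0). Then φ^n = 0 as an endomorphism of E. -/
import Mathlib


open TensorProduct

/-- (in the affine incarnation: an integral scheme of finite type over an
algebraically closed field `k` is covered by spectra of integral finite type `k`-algebras `R`,
a locally free sheaf of rank `n` corresponds to a finite projective `R`-module `M` of constant
fiber rank `n`, closed points correspond to maximal ideals, and the fiber of `E` at a closed
point `𝔪` is `M ⊗_R R/𝔪`).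

Let `R` be an integral domain of finite type over an algebraically closed field `k`, let `M`
be a finite projective `R`-module whose fiber at every maximal ideal `𝔪` has dimension `n`
over `R/𝔪`, and let `φ : M → M` be an `R`-linear endomorphism such that for every maximal
ideal `𝔪` the induced endomorphism `φ(𝔪)` of the fiber `M ⊗ R/𝔪` is nilpotent (equivalently,
`φ(𝔪)^n = 0`). Then `φ^n = 0` as an endomorphism of `M`. -/
theorem endo_nilpotent_of_fiberwise_nilpotent {k : Type} [Field k] [IsAlgClosed k]
    (R : Type) [CommRing R] [IsDomain R] [Algebra k R] (hft : Algebra.FiniteType k R)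
    (M : Type) [AddCommGroup M] [Module R M] [Module.Finite R M] [Module.Projective R M]
    (n : ℕ)
    (hrank : ∀ 𝔪 : Ideal R, 𝔪.IsMaximal → Module.finrank (R ⧸ 𝔪) ((R ⧸ 𝔪) ⊗[R] M) = n)
    (φ : M →ₗ[R] M)
    (hfib : ∀ 𝔪 : Ideal R, 𝔪.IsMaximal → (LinearMap.baseChange (R ⧸ 𝔪) φ) ^ n = 0) :
    (φ ^ n : Module.End R M) = 0 := by
  classical
  have : IsJacobsonRing R := isJacobsonRing_of_finiteType (A := k)
  -- Jacobson radical is zero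
  have hjac : ∀ r : R, (∀ 𝔪 : Ideal R, 𝔪.IsMaximal → r ∈ 𝔪) → r = 0 := by
    intro r hr
    have h1 : (⊥ : Ideal R).jacobson = ⊥ :=
      IsJacobsonRing.out ‹IsJacobsonRing R› (Ideal.isRadical_bot_of_noZeroDivisors)
    have : r ∈ (⊥ : Ideal R).jacobson := by
      rw [Ideal.jacobson]
      exact Ideal.mem_sInf.mpr fun _ hJ => hr _ hJ.2
    rwa [h1, Ideal.mem_bot] at this
  set ψ : Module.End R M := φ ^ n with hψ
  have hmem : ∀ (x : M) (𝔪 : Ideal R), 𝔪.IsMaximal → ψ x ∈ (𝔪 • ⊤ : Submodule R M) := by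
    intro x 𝔪 h𝔪
    have h0 : (1 : R ⧸ 𝔪) ⊗ₜ[R] (ψ x) = 0 := by
      have h1 : LinearMap.baseChange (R ⧸ 𝔪) ψ ((1 : R ⧸ 𝔪) ⊗ₜ[R] x) = (1 : R ⧸ 𝔪) ⊗ₜ[R] (ψ x) :=
        by simp
      rw [← h1, hψ, LinearMap.baseChange_pow, hfib 𝔪 h𝔪]
      rfl
    have := congrArg (TensorProduct.quotTensorEquivQuotSMul M 𝔪) h0
    rw [map_zero] at this
    have h2 : (1 : R ⧸ 𝔪) ⊗ₜ[R] (ψ x) = Ideal.Quotient.mk 𝔪 1 ⊗ₜ[R] (ψ x) := rfl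
    rw [h2, TensorProduct.quotTensorEquivQuotSMul_mk_tmul, one_smul] at this
    exact (Submodule.Quotient.mk_eq_zero _).mp this
  have hfun : ∀ (x : M) (f : M →ₗ[R] R), f (ψ x) = 0 := by
    intro x f
    apply hjac
    intro 𝔪 h𝔪
    have h3 : f (ψ x) ∈ Submodule.map f (𝔪 • ⊤ : Submodule R M) :=
      Submodule.mem_map_of_mem (hmem x 𝔪 h𝔪)
    rw [Submodule.map_smul''] at h3
    have h4 : (𝔪 • Submodule.map f ⊤ : Submodule R R) ≤ 𝔪 := by
      apply Submodule.smul_le.mpr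
      intro r hr y _
      exact Ideal.mul_mem_right y 𝔪 hr
    exact h4 h3
  obtain ⟨s, hs⟩ := Module.projective_def.mp ‹Module.Projective R M›
  ext x
  have hz : s (ψ x) = 0 := by
    ext a
    exact hfun x ((Finsupp.lapply a).comp s)
  have := hs (ψ x)
  rw [hz, map_zero] at this
  simpa [hψ] using this.symm
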